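/- arXiv:1001.0322 — 5 statements merged into one kernel-verified Lean document; each statement's English description precedes it below -/
import Mathlib

section
/- In the formal power series ring ℂ⟦z,w⟧ in two variables (i.e. MvPowerSeries (Fin 2) ℂ with z = X 0 and w = X 1), for every k ≥ 1 and every p with 0 ≤ p ≤ k−1, the element w^p · z^{k−1−p} does NOT belong to the ideal generated by z + w and w^k. -/
open MvPowerSeries Finsupp

/-- The exponent of `z^a w^b` as a finitely supported function on `Fin 2`. -/
noncomputable def ee (a b : ℕ) : Fin 2 →₀ ℕ := Finsupp.single 0 a + Finsupp.single 1 b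

lemma ee_apply0 (a b : ℕ) : ee a b 0 = a := by
  simp [ee, Finsupp.single_apply]

lemma ee_apply1 (a b : ℕ) : ee a b 1 = b := by
  simp [ee, Finsupp.single_apply]

lemma single0_le_ee (a b : ℕ) : Finsupp.single (0 : Fin 2) 1 ≤ ee a b ↔ 1 ≤ a := by
  constructor
  · intro h
    simpa [ee_apply0, Finsupp.single_apply] using h 0
  · intro h s
    fin_cases s <;> simp [ee_apply0, ee_apply1, Finsupp.single_apply, h]

lemma single1_le_ee (a b n : ℕ) : Finsupp.single (1 : Fin 2) n ≤ ee a b ↔ n ≤ b := by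
  constructor
  · intro h
    simpa [ee_apply1, Finsupp.single_apply] using h 1
  · intro h s
    fin_cases s <;> simp [ee_apply0, ee_apply1, Finsupp.single_apply, h]

lemma ee_sub_single0 (a b : ℕ) : ee a b - Finsupp.single (0 : Fin 2) 1 = ee (a - 1) b := by
  ext s
  fin_cases s <;> simp [Finsupp.tsub_apply, ee_apply0, ee_apply1, Finsupp.single_apply]

lemma ee_sub_single1 (a b : ℕ) : ee a b - Finsupp.single (1 : Fin 2) 1 = ee a (b - 1) := by
  ext s
  fin_cases s <;> simp [Finsupp.tsub_apply, ee_apply0, ee_apply1, Finsupp.single_apply]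

lemma ee_inj {a b a' b' : ℕ} (h : ee a b = ee a' b') : a = a' ∧ b = b' :=
  ⟨by simpa [ee_apply0] using congrArg (fun f => f 0) h,
   by simpa [ee_apply1] using congrArg (fun f => f 1) h⟩

/-- Optimality example: in `ℂ⟦z,w⟧` (with `z = X 0`, `w = X 1`), for `k ≥ 1` and
`0 ≤ p ≤ k-1`, the element `w^p z^{k-1-p}` does not belong to the ideal `(z + w, w^k)`. -/
theorem pow_mul_pow_not_mem_span_add_pow (k p : ℕ) (hk : 1 ≤ k) (hp : p ≤ k - 1) :
    (MvPowerSeries.X 1 : MvPowerSeries (Fin 2) ℂ) ^ p *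
        (MvPowerSeries.X 0 : MvPowerSeries (Fin 2) ℂ) ^ (k - 1 - p) ∉
      Ideal.span
        {(MvPowerSeries.X 0 : MvPowerSeries (Fin 2) ℂ) + MvPowerSeries.X 1,
          (MvPowerSeries.X 1 : MvPowerSeries (Fin 2) ℂ) ^ k} := by
  rw [Ideal.mem_span_pair]
  rintro ⟨f, g, h⟩
  -- the alternating sum of coefficients along the diagonal a + b = k - 1
  set L : MvPowerSeries (Fin 2) ℂ → ℂ :=
    fun φ => ∑ a ∈ Finset.range k, (-1 : ℂ) ^ a * MvPowerSeries.coeff (ee a (k - 1 - a)) φ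
    with hL
  have hadd : ∀ φ ψ, L (φ + ψ) = L φ + L ψ := by
    intro φ ψ
    simp [hL, map_add, mul_add, Finset.sum_add_distrib]
  set c : ℕ → ℕ → ℂ := fun a b => MvPowerSeries.coeff (ee a b) f with hc
  -- L of the right-hand side is (-1)^(k-1-p)
  have hR : L ((MvPowerSeries.X 1 : MvPowerSeries (Fin 2) ℂ) ^ p *
      (MvPowerSeries.X 0 : MvPowerSeries (Fin 2) ℂ) ^ (k - 1 - p)) = (-1 : ℂ) ^ (k - 1 - p) := by
    simp only [hL]
    have hmon : (MvPowerSeries.X 1 : MvPowerSeries (Fin 2) ℂ) ^ p *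
        (MvPowerSeries.X 0 : MvPowerSeries (Fin 2) ℂ) ^ (k - 1 - p)
        = MvPowerSeries.monomial (ee (k - 1 - p) p) 1 := by
      rw [MvPowerSeries.X_pow_eq, MvPowerSeries.X_pow_eq, MvPowerSeries.monomial_mul_monomial,
        one_mul, ee, add_comm]
    rw [hmon, Finset.sum_eq_single (k - 1 - p)]
    · have hpp : k - 1 - (k - 1 - p) = p := by omega
      rw [hpp, MvPowerSeries.coeff_monomial_same, mul_one]
    · intro a _ ha
      rw [MvPowerSeries.coeff_monomial, if_neg, mul_zero]
      exact fun hcontra => ha (ee_inj hcontra).1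
    · exact fun hnot => absurd (Finset.mem_range.mpr (by omega)) hnot
  -- L of f * (z + w) is 0
  have hF : L (f * ((MvPowerSeries.X 0 : MvPowerSeries (Fin 2) ℂ) + MvPowerSeries.X 1)) = 0 := by
    simp only [hL]
    have e1 : ∀ a, MvPowerSeries.coeff (ee a (k - 1 - a))
        (f * (MvPowerSeries.X 0 : MvPowerSeries (Fin 2) ℂ))
        = if 1 ≤ a then c (a - 1) (k - 1 - a) else 0 := by
      intro a
      rw [MvPowerSeries.X_def, MvPowerSeries.coeff_mul_monomial]
      simp only [single0_le_ee, ee_sub_single0, mul_one, hc]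
    have e2 : ∀ a, MvPowerSeries.coeff (ee a (k - 1 - a))
        (f * (MvPowerSeries.X 1 : MvPowerSeries (Fin 2) ℂ))
        = if 1 ≤ k - 1 - a then c a (k - 2 - a) else 0 := by
      intro a
      rw [MvPowerSeries.X_def, MvPowerSeries.coeff_mul_monomial]
      simp only [single1_le_ee, ee_sub_single1, mul_one, hc]
      have hsub : k - 1 - a - 1 = k - 2 - a := by omega
      rw [hsub]
    set H : ℕ → ℂ := fun a => (-1 : ℂ) ^ (a + 1) * c a (k - 2 - a) with hH
    have hHval : ∀ a, H a = (-1 : ℂ) ^ (a + 1) * c a (k - 2 - a) := fun a => rfl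
    have split : ∀ a, (-1 : ℂ) ^ a * MvPowerSeries.coeff (ee a (k - 1 - a))
        (f * ((MvPowerSeries.X 0 : MvPowerSeries (Fin 2) ℂ) + MvPowerSeries.X 1))
        = (if 1 ≤ a then H (a - 1) else 0) + (if 1 ≤ k - 1 - a then -H a else 0) := by
      intro a
      rw [mul_add, map_add, mul_add, e1, e2]
      congr 1
      · by_cases h1 : 1 ≤ a
        · rw [if_pos h1, if_pos h1, hHval]
          have ha : a - 1 + 1 = a := by omega
          have hb : k - 2 - (a - 1) = k - 1 - a := by omega
          rw [ha, hb]
        · rw [if_neg h1, if_neg h1, mul_zero]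
      · by_cases h2 : 1 ≤ k - 1 - a
        · rw [if_pos h2, if_pos h2, hHval]
          ring
        · rw [if_neg h2, if_neg h2, mul_zero]
    rw [Finset.sum_congr rfl (fun a _ => split a), Finset.sum_add_distrib]
    have hk1 : k = (k - 1) + 1 := by omega
    have s1 : ∑ a ∈ Finset.range k, (if 1 ≤ a then H (a - 1) else 0)
        = ∑ a ∈ Finset.range (k - 1), H a := by
      rw [hk1, Finset.sum_range_succ']
      simp
    have s2 : ∑ a ∈ Finset.range k, (if 1 ≤ k - 1 - a then -H a else 0)
        = -∑ a ∈ Finset.range (k - 1), H a := by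
      rw [hk1, Finset.sum_range_succ, if_neg (by omega), add_zero, ← Finset.sum_neg_distrib]
      refine Finset.sum_congr rfl fun a ha => ?_
      rw [if_pos (by have := Finset.mem_range.mp ha; omega)]
    rw [s1, s2, add_neg_cancel]
  -- L of g * w^k is 0
  have hG : L (g * (MvPowerSeries.X 1 : MvPowerSeries (Fin 2) ℂ) ^ k) = 0 := by
    simp only [hL]
    refine Finset.sum_eq_zero fun a _ => ?_
    rw [MvPowerSeries.X_pow_eq, MvPowerSeries.coeff_mul_monomial, if_neg, mul_zero]
    rw [single1_le_ee]
    omega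
  have := congrArg L h
  rw [hadd, hF, hG, hR] at this
  have hne : (-1 : ℂ) ^ (k - 1 - p) ≠ 0 := by
    apply pow_ne_zero
    norm_num
  rw [zero_add] at this
  exact hne this.symm
end

section
/- For every k ≥ 1 and every p with 0 ≤ p ≤ k−1, there do not exist a neighborhood V of 0 in ℂ × ℂ and complex-analytic functions g, h on V such that w^p · z^{k−1−p} = (z + w) · g(z,w) + w^k · h(z,w) for all (z,w) ∈ V. -/
/-- Analytic-germ formulation of the optimality example: for `k ≥ 1` and `0 ≤ p ≤ k-1`,
there is no neighborhood `V` of `0 ∈ ℂ²` and analytic functions `g, h` on `V` with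
`w^p z^{k-1-p} = (z+w) g(z,w) + w^k h(z,w)` on `V`. -/
theorem not_exists_analytic_decomposition (k p : ℕ) (hk : 1 ≤ k) (hp : p ≤ k - 1) :
    ¬ ∃ V ∈ nhds (0 : ℂ × ℂ), ∃ g h : ℂ × ℂ → ℂ,
        AnalyticOnNhd ℂ g V ∧ AnalyticOnNhd ℂ h V ∧
        ∀ q ∈ V, q.2 ^ p * q.1 ^ (k - 1 - p) =
          (q.1 + q.2) * g q + q.2 ^ k * h q := by
  rintro ⟨V, hV, g, h, hg, hh, heq⟩
  set m := k - 1 - p with hm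
  have hcont : Continuous (fun w : ℂ => ((-w, w) : ℂ × ℂ)) := by continuity
  have hU : (fun w : ℂ => ((-w, w) : ℂ × ℂ)) ⁻¹' V ∈ nhds (0 : ℂ) := by
    apply hcont.continuousAt.preimage_mem_nhds
    simp only [neg_zero]
    exact hV
  -- key pointwise identity for w ≠ 0 in the preimage
  have key : ∀ w : ℂ, ((-w, w) : ℂ × ℂ) ∈ V → w ≠ 0 →
      ((-1 : ℂ)) ^ m = w * h (-w, w) := by
    intro w hw hw0
    have hpm : p + m = k - 1 := by omega
    have hkk : k = (k - 1) + 1 := by omega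
    have h1 := heq (-w, w) hw
    simp only at h1
    have h2 : w ^ p * (-w) ^ m = w ^ k * h (-w, w) := by
      rw [h1]; ring_nf
    have h3 : (-w) ^ m = (-1 : ℂ) ^ m * w ^ m := by
      rw [neg_pow]
    have h4 : w ^ (k - 1) * ((-1 : ℂ) ^ m) = w ^ (k - 1) * (w * h (-w, w)) := by
      calc w ^ (k - 1) * ((-1 : ℂ) ^ m) = w ^ p * (-w) ^ m := by
            rw [h3, ← hpm, pow_add]; ring
        _ = w ^ k * h (-w, w) := h2
        _ = w ^ (k - 1) * (w * h (-w, w)) := by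
            have : w ^ k = w ^ (k - 1) * w := by
              rw [← pow_succ, Nat.sub_add_cancel hk]
            rw [this]; ring
    exact mul_left_cancel₀ (pow_ne_zero _ hw0) h4
  -- continuity: w * h(-w,w) → 0 as w → 0
  have hc : ContinuousAt h 0 := (hh 0 (mem_of_mem_nhds hV)).continuousAt
  have ht : Filter.Tendsto (fun w : ℂ => w * h (-w, w)) (nhds 0) (nhds 0) := by
    have h1 : Filter.Tendsto (fun w : ℂ => ((-w, w) : ℂ × ℂ)) (nhds 0) (nhds 0) := by
      have h0 := hcont.tendsto 0
      simp only [neg_zero] at h0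
      exact h0
    have h2 : Filter.Tendsto (fun w : ℂ => h (-w, w)) (nhds 0) (nhds (h 0)) :=
      hc.tendsto.comp h1
    simpa using (Filter.tendsto_id.mul h2)
  -- but along 𝓝[≠] 0 the function equals the constant (-1)^m
  have hev : (fun w : ℂ => w * h (-w, w)) =ᶠ[nhdsWithin (0 : ℂ) {(0:ℂ)}ᶜ]
      fun _ => ((-1 : ℂ)) ^ m := by
    filter_upwards [nhdsWithin_le_nhds (s := {(0:ℂ)}ᶜ) hU, self_mem_nhdsWithin] with w hw hw0
    exact (key w hw hw0).symm
  have ht2 : Filter.Tendsto (fun w : ℂ => w * h (-w, w))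
      (nhdsWithin (0 : ℂ) {(0:ℂ)}ᶜ) (nhds (((-1 : ℂ)) ^ m)) := by
    rw [Filter.tendsto_congr' hev]
    exact tendsto_const_nhds
  have : ((-1 : ℂ)) ^ m = 0 :=
    tendsto_nhds_unique ht2 (ht.mono_left nhdsWithin_le_nhds)
  exact pow_ne_zero m (by norm_num) this
end

section
/- Let A be a commutative ring that is a ℚ-algebra, let B = A⟦X⟧ be the formal power series ring with formal derivative d, let 𝔞 ⊆ B be an ideal, and let k ≥ 1, l ≥ 1. Suppose φ ∈ B satisfies d^j φ ∈ 𝔞^{k+l−1−j} + (X) for every j with 0 ≤ j ≤ k−1 (where d^j denotes the j-fold iterate of the derivative and (X) is the ideal generated by X). Then φ ∈ Σ_{i=0}^{k−1} X^i · 𝔞^{k+l−1−i} + (X^k); in particular φ ∈ 𝔞^l + (X^k). -/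
open PowerSeries

section Aux

variable {A : Type*} [CommRing A]

local notation "B" => PowerSeries A
local notation "d" => fun ψ : PowerSeries A => PowerSeries.derivative A ψ

/-- A derivation maps `𝔞 ^ r` into `𝔞 ^ (r - 1)`. -/
private lemma bs_deriv_mem_pow (𝔞 : Ideal (PowerSeries A)) :
    ∀ (r : ℕ) (a : PowerSeries A), a ∈ 𝔞 ^ r →
      PowerSeries.derivative A a ∈ 𝔞 ^ (r - 1) := by
  intro r
  induction r with
  | zero => intro a _; simp
  | succ r ih =>
    intro a ha
    rw [pow_succ] at ha
    refine Submodule.mul_induction_on ha ?_ ?_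
    · intro x hx y hy
      have h := Derivation.leibniz (PowerSeries.derivative A) x y
      rw [h]
      simp only [smul_eq_mul, Nat.add_sub_cancel]
      refine add_mem ?_ ?_
      · exact Ideal.mul_mem_right _ _ hx
      · have hdx := ih x hx
        rcases Nat.eq_zero_or_pos r with hr | hr
        · subst hr; simp
        · have : y * PowerSeries.derivative A x ∈ 𝔞 * 𝔞 ^ (r - 1) :=
            Ideal.mul_mem_mul hy hdx
          have heq : 𝔞 * 𝔞 ^ (r - 1) = 𝔞 ^ r := by
            rw [← pow_succ']
            congr 1
            omega
          rwa [heq] at this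
    · intro x y hx hy
      simpa using add_mem hx hy

private lemma bs_iter_deriv_mem_pow (𝔞 : Ideal (PowerSeries A)) (n : ℕ) :
    ∀ (r : ℕ) (a : PowerSeries A), a ∈ 𝔞 ^ r → d^[n] a ∈ 𝔞 ^ (r - n) := by
  induction n with
  | zero => intro r a ha; simpa using ha
  | succ n ih =>
    intro r a ha
    rw [Function.iterate_succ_apply']
    have := bs_deriv_mem_pow 𝔞 (r - n) _ (ih r a ha)
    have he : r - n - 1 = r - (n + 1) := by omega
    rwa [he] at this

private lemma bs_iter_add (n : ℕ) (x y : PowerSeries A) :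
    d^[n] (x + y) = d^[n] x + d^[n] y := by
  induction n generalizing x y with
  | zero => simp
  | succ n ih => rw [Function.iterate_succ_apply, Function.iterate_succ_apply,
      Function.iterate_succ_apply]; simp only [map_add]; exact ih _ _

private lemma bs_iter_zero (n : ℕ) : d^[n] (0 : PowerSeries A) = 0 := by
  induction n with
  | zero => simp
  | succ n ih => rw [Function.iterate_succ_apply]; simp only [map_zero]; exact ih

private lemma bs_iter_nsmul (n c : ℕ) (x : PowerSeries A) :
    d^[n] (c • x) = c • d^[n] x := by
  induction c with
  | zero => simpa using bs_iter_zero n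
  | succ c ih =>
    rw [succ_nsmul, succ_nsmul, bs_iter_add]
    rw [ih]

private lemma bs_iter_sum {ι : Type*} (n : ℕ) (s : Finset ι) (f : ι → PowerSeries A) :
    d^[n] (∑ i ∈ s, f i) = ∑ i ∈ s, d^[n] (f i) := by
  classical
  induction s using Finset.induction_on with
  | empty => simpa using bs_iter_zero n
  | insert _ _ hj ih =>
    rw [Finset.sum_insert hj, Finset.sum_insert hj, bs_iter_add, ih]

/-- The basic Leibniz step for `X ^ i * a`. -/
private lemma bs_deriv_X_pow_mul (i : ℕ) (a : PowerSeries A) :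
    PowerSeries.derivative A ((X : PowerSeries A) ^ i * a)
      = (X : PowerSeries A) ^ i * PowerSeries.derivative A a
        + i • ((X : PowerSeries A) ^ (i - 1) * a) := by
  rw [Derivation.leibniz, Derivation.leibniz_pow, derivative_X]
  simp only [smul_eq_mul, mul_one, nsmul_eq_mul]
  ring

/-- If `n < i` then `d^[n] (X^i * a)` is divisible by `X`. -/
private lemma bs_iter_X_kill (n : ℕ) :
    ∀ (i : ℕ) (a : PowerSeries A), n < i →
      ∃ g : PowerSeries A, d^[n] ((X : PowerSeries A) ^ i * a) = X * g := by
  induction n with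
  | zero =>
    intro i a hi
    refine ⟨X ^ (i - 1) * a, ?_⟩
    simp only [Function.iterate_zero, id_eq]
    rw [← mul_assoc, ← pow_succ']
    congr 2
    omega
  | succ n ih =>
    intro i a hi
    rw [Function.iterate_succ_apply, bs_deriv_X_pow_mul, bs_iter_add, bs_iter_nsmul]
    obtain ⟨g1, hg1⟩ := ih i (PowerSeries.derivative A a) (by omega)
    obtain ⟨g2, hg2⟩ := ih (i - 1) a (by omega)
    refine ⟨g1 + i • g2, ?_⟩
    rw [hg1, hg2]
    simp only [nsmul_eq_mul]
    ring

/-- Key lemma: `d^[n] (X^i * a) ∈ 𝔞^(r-(n-i)) + (X)` for `a ∈ 𝔞^r`, `i ≤ n`. -/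
private lemma bs_iter_X_pow_mem (𝔞 : Ideal (PowerSeries A)) (n : ℕ) :
    ∀ (i r : ℕ) (a : PowerSeries A), a ∈ 𝔞 ^ r → i ≤ n →
      d^[n] ((X : PowerSeries A) ^ i * a) ∈
        𝔞 ^ (r - (n - i)) ⊔ Ideal.span {(X : PowerSeries A)} := by
  induction n with
  | zero =>
    intro i r a ha hi
    interval_cases i
    simp only [pow_zero, one_mul, Function.iterate_zero, id_eq, Nat.sub_zero]
    exact Submodule.mem_sup_left (by simpa using ha)
  | succ n ih =>
    intro i r a ha hi
    rcases Nat.eq_zero_or_pos i with rfl | hipos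
    · simp only [pow_zero, one_mul]
      exact Submodule.mem_sup_left (bs_iter_deriv_mem_pow 𝔞 (n + 1) r a ha)
    · obtain ⟨j, rfl⟩ : ∃ j, i = j + 1 := ⟨i - 1, by omega⟩
      rw [Function.iterate_succ_apply, bs_deriv_X_pow_mul, bs_iter_add, bs_iter_nsmul]
      refine add_mem ?_ ?_
      · -- term X^(j+1) * d a
        rcases Nat.lt_or_ge n (j + 1) with hc | hc
        · -- j + 1 > n : in (X)
          obtain ⟨g, hg⟩ := bs_iter_X_kill n (j + 1) (PowerSeries.derivative A a) hc
          rw [hg]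
          exact Submodule.mem_sup_right (Ideal.mem_span_singleton'.mpr ⟨g, by ring⟩)
        · have hda : PowerSeries.derivative A a ∈ 𝔞 ^ (r - 1) :=
            bs_deriv_mem_pow 𝔞 r a ha
          have h := ih (j + 1) (r - 1) _ hda hc
          refine SetLike.le_def.mp (sup_le_sup_right (Ideal.pow_le_pow_right ?_) _) h
          omega
      · -- term (j+1) • (X^j * a)
        have h := ih j r a ha (by omega)
        have h' := SetLike.le_def.mp (sup_le_sup_right (Ideal.pow_le_pow_right
          (show r - (n + 1 - (j + 1)) ≤ r - (n - j) by omega)) _) h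
        have hsub : j + 1 - 1 = j := rfl
        rw [hsub]
        simp only [nsmul_eq_mul]
        exact Ideal.mul_mem_left _ _ h'

/-- `d^[n] (X^n * ψ) = n! * ψ + X * g` for some `g`. -/
private lemma bs_iter_X_pow_self (n : ℕ) :
    ∀ ψ : PowerSeries A, ∃ g : PowerSeries A,
      d^[n] ((X : PowerSeries A) ^ n * ψ) = (n.factorial : PowerSeries A) * ψ + X * g := by
  induction n with
  | zero => intro ψ; exact ⟨0, by simp⟩
  | succ n ih =>
    intro ψ
    rw [Function.iterate_succ_apply, bs_deriv_X_pow_mul, bs_iter_add, bs_iter_nsmul]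
    obtain ⟨g1, hg1⟩ := bs_iter_X_kill n (n + 1) (PowerSeries.derivative A ψ) (by omega)
    obtain ⟨g2, hg2⟩ := ih ψ
    refine ⟨g1 + (n + 1) • g2, ?_⟩
    rw [hg1]
    have hsub : n + 1 - 1 = n := rfl
    rw [hsub, hg2]
    rw [Nat.factorial_succ]
    push_cast
    simp only [nsmul_eq_mul]
    push_cast
    ring

end Aux

/-- Membership statement from the paper's proof of the Briançon–Skoda theorem for
`O/(X^k)`: if `d^j φ ∈ 𝔞^{k+l-1-j} + (X)` for `0 ≤ j ≤ k-1`, where `d` is the formal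
derivative on `A⟦X⟧`, then `φ ∈ Σ_{i<k} X^i 𝔞^{k+l-1-i} + (X^k)`; in particular
`φ ∈ 𝔞^l + (X^k)`. -/
theorem powerSeries_membership_from_derivative_bounds
    (A : Type*) [CommRing A] [Algebra ℚ A] (𝔞 : Ideal (PowerSeries A))
    (k l : ℕ) (hk : 1 ≤ k) (hl : 1 ≤ l) (φ : PowerSeries A)
    (hder : ∀ j ≤ k - 1,
      (fun ψ : PowerSeries A => PowerSeries.derivative A ψ)^[j] φ ∈
        𝔞 ^ (k + l - 1 - j) + Ideal.span {(PowerSeries.X : PowerSeries A)}) :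
    φ ∈ (⨆ i ∈ Finset.range k,
          Ideal.span {(PowerSeries.X : PowerSeries A) ^ i} * 𝔞 ^ (k + l - 1 - i)) +
        Ideal.span {(PowerSeries.X : PowerSeries A) ^ k} ∧
      φ ∈ 𝔞 ^ l + Ideal.span {(PowerSeries.X : PowerSeries A) ^ k} := by
  classical
  -- main inductive decomposition
  have main : ∀ p, p ≤ k - 1 →
      ∃ (a : ℕ → PowerSeries A) (ψ : PowerSeries A),
        (∀ i, i ≤ p → a i ∈ 𝔞 ^ (k + l - 1 - i)) ∧
        φ = (∑ i ∈ Finset.range (p + 1), (PowerSeries.X : PowerSeries A) ^ i * a i)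
            + (PowerSeries.X : PowerSeries A) ^ (p + 1) * ψ := by
    intro p
    induction p with
    | zero =>
      intro _
      have h0 := hder 0 (by omega)
      simp only [Function.iterate_zero, id_eq, Nat.sub_zero] at h0
      rw [Submodule.add_eq_sup] at h0
      obtain ⟨y, hy, z, hz, hyz⟩ := Submodule.mem_sup.mp h0
      obtain ⟨c, hc⟩ := Ideal.mem_span_singleton'.mp hz
      refine ⟨fun _ => y, c, ?_, ?_⟩
      · intro i hi
        interval_cases i
        simpa using hy
      · rw [← hyz, ← hc, Finset.sum_range_one]
        ring
    | succ p ihp =>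
      intro hp
      obtain ⟨a, ψ, ha, hφ⟩ := ihp (by omega)
      -- Apply the (p+1)-st derivative
      have hD := hder (p + 1) hp
      rw [Submodule.add_eq_sup] at hD
      set J : Ideal (PowerSeries A) :=
        𝔞 ^ (k + l - 1 - (p + 1)) ⊔ Ideal.span {(PowerSeries.X : PowerSeries A)} with hJ
      -- expand
      have hexp : (fun ψ : PowerSeries A => PowerSeries.derivative A ψ)^[p+1] φ
          = (∑ i ∈ Finset.range (p + 1),
              (fun ψ : PowerSeries A => PowerSeries.derivative A ψ)^[p+1]
                ((PowerSeries.X : PowerSeries A) ^ i * a i))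
            + (fun ψ : PowerSeries A => PowerSeries.derivative A ψ)^[p+1]
                ((PowerSeries.X : PowerSeries A) ^ (p + 1) * ψ) := by
        rw [hφ, bs_iter_add, bs_iter_sum]
      have hsummem : (∑ i ∈ Finset.range (p + 1),
          (fun ψ : PowerSeries A => PowerSeries.derivative A ψ)^[p+1]
            ((PowerSeries.X : PowerSeries A) ^ i * a i)) ∈ J := by
        refine Submodule.sum_mem _ ?_
        intro i hi
        have hi' : i ≤ p := by
          have := Finset.mem_range.mp hi; omega
        have h := bs_iter_X_pow_mem 𝔞 (p + 1) i (k + l - 1 - i) (a i) (ha i hi') (by omega)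
        exact SetLike.le_def.mp (sup_le_sup_right (Ideal.pow_le_pow_right (by omega)) _) h
      have htail : (fun ψ : PowerSeries A => PowerSeries.derivative A ψ)^[p+1]
          ((PowerSeries.X : PowerSeries A) ^ (p + 1) * ψ) ∈ J := by
        have heq : (fun ψ : PowerSeries A => PowerSeries.derivative A ψ)^[p+1]
              ((PowerSeries.X : PowerSeries A) ^ (p + 1) * ψ)
            = (fun ψ : PowerSeries A => PowerSeries.derivative A ψ)^[p+1] φ
              - (∑ i ∈ Finset.range (p + 1),
                  (fun ψ : PowerSeries A => PowerSeries.derivative A ψ)^[p+1]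
                    ((PowerSeries.X : PowerSeries A) ^ i * a i)) := by
          rw [hexp]; ring
        rw [heq]
        exact sub_mem hD hsummem
      -- extract ψ
      obtain ⟨g, hg⟩ := bs_iter_X_pow_self (p + 1) ψ
      have hfacψ : (((p + 1).factorial : ℕ) : PowerSeries A) * ψ ∈ J := by
        have hXg : (PowerSeries.X : PowerSeries A) * g ∈ J :=
          Submodule.mem_sup_right (Ideal.mem_span_singleton'.mpr ⟨g, by ring⟩)
        have hs := sub_mem htail hXg
        rw [hg] at hs
        simpa using hs
      have hψJ : ψ ∈ J := by
        have hcast : ψ = (algebraMap ℚ (PowerSeries A) (((p + 1).factorial : ℚ)⁻¹))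
            * ((((p + 1).factorial : ℕ) : PowerSeries A) * ψ) := by
          rw [← mul_assoc]
          have hmap : (((p + 1).factorial : ℕ) : PowerSeries A)
              = algebraMap ℚ (PowerSeries A) (((p + 1).factorial : ℚ)) := by
            simp
          rw [hmap, ← map_mul, inv_mul_cancel₀, map_one, one_mul]
          exact_mod_cast Nat.factorial_ne_zero (p + 1)
        rw [hcast]
        exact Ideal.mul_mem_left _ _ hfacψ
      obtain ⟨y, hy, z, hz, hyz⟩ := Submodule.mem_sup.mp hψJ
      obtain ⟨c, hc⟩ := Ideal.mem_span_singleton'.mp hz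
      refine ⟨Function.update a (p + 1) y, c, ?_, ?_⟩
      · intro i hi
        rcases Nat.lt_or_ge i (p + 1) with hlt | hge
        · rw [Function.update_of_ne (by omega)]
          exact ha i (by omega)
        · have hieq : i = p + 1 := by omega
          subst hieq
          rw [Function.update_self]
          exact hy
      · rw [Finset.sum_range_succ, Function.update_self]
        have hsame : ∀ i ∈ Finset.range (p + 1),
            (PowerSeries.X : PowerSeries A) ^ i * Function.update a (p + 1) y i
              = (PowerSeries.X : PowerSeries A) ^ i * a i := by
          intro i hi
          rw [Function.update_of_ne (by have := Finset.mem_range.mp hi; omega)]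
        rw [Finset.sum_congr rfl hsame]
        rw [hφ, ← hyz, ← hc]
        ring
  -- conclude
  obtain ⟨a, ψ, ha, hφ⟩ := main (k - 1) le_rfl
  have hk1 : k - 1 + 1 = k := by omega
  rw [hk1] at hφ
  have ha' : ∀ i, i < k → a i ∈ 𝔞 ^ (k + l - 1 - i) := fun i hi => ha i (by omega)
  constructor
  · rw [Submodule.add_eq_sup, hφ]
    refine Submodule.add_mem_sup ?_ ?_
    · refine Submodule.sum_mem _ ?_
      intro i hi
      refine Submodule.mem_iSup_of_mem i (Submodule.mem_iSup_of_mem hi ?_)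
      exact Ideal.mul_mem_mul (Ideal.mem_span_singleton_self _) (ha' i (Finset.mem_range.mp hi))
    · exact Ideal.mul_mem_right _ _ (Ideal.mem_span_singleton_self _)
  · rw [Submodule.add_eq_sup, hφ]
    refine Submodule.add_mem_sup ?_ ?_
    · refine Submodule.sum_mem _ ?_
      intro i hi
      have hi' := Finset.mem_range.mp hi
      have hle : 𝔞 ^ (k + l - 1 - i) ≤ 𝔞 ^ l := Ideal.pow_le_pow_right (by omega)
      exact Ideal.mul_mem_left _ _ (hle (ha' i hi'))
    · exact Ideal.mul_mem_right _ _ (Ideal.mem_span_singleton_self _)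
end

section
/- Let R₀ be a commutative ring, R a commutative R₀-algebra, Ω an R-module, and D : R → Ω an R₀-linear derivation. Fix l ≥ 1, m ≥ 1, let F be the free R-module with basis e(i,j) indexed by (i,j) ∈ Fin l × Fin m, and let Λ be the exterior algebra over R of the module M = Ω × F, with canonical inclusion ι : M → Λ. Let a₀, a'₁, …, a'_m ∈ R and set a_j = a₀ · a'_j. Define, for each i ∈ Fin l, the elements u_i = Σ_{j=1}^m a_j • ι(0, e(i,j)) (of degree 1) and v_i = Σ_{j=1}^m ι(D a_j, 0) · ι(0, e(i,j)) (of degree 2) of Λ. Then for every β : Fin l → ℕ there exists ξ ∈ Λ such that (Π_{i=1}^{l} u_i) · (Π_{i=1}^{l} v_i^{β_i}) = a₀^{l + Σ_i β_i} • ξ. -/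
open ExteriorAlgebra

section Aux

variable {R M : Type*} [CommRing R] [AddCommGroup M] [Module R M]

private lemma ι_mul_ι_neg_swap (x y : M) :
    ExteriorAlgebra.ι R x * ExteriorAlgebra.ι R y
      = -(ExteriorAlgebra.ι R y * ExteriorAlgebra.ι R x) :=
  eq_neg_of_add_eq_zero_left (ExteriorAlgebra.ι_add_mul_swap x y)

private lemma ι_mul_ι_central (x y : M) (t : ExteriorAlgebra R M) :
    Commute (ExteriorAlgebra.ι R x * ExteriorAlgebra.ι R y) t := by
  induction t using ExteriorAlgebra.induction with
  | algebraMap r => exact (Algebra.commutes r _).symm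
  | ι z =>
      show _ = _
      rw [mul_assoc, ι_mul_ι_neg_swap y z, mul_neg, ← mul_assoc,
        ι_mul_ι_neg_swap x z, neg_mul, neg_neg, mul_assoc]
  | mul a b ha hb => exact ha.mul_right hb
  | add a b ha hb => exact ha.add_right hb

private lemma key_pow (a₀ : R) (A B C : ExteriorAlgebra R M)
    (hB : ∀ t, Commute B t) (hC : ∀ t, Commute C t) (hAC : A * C = 0) :
    ∀ n : ℕ, A * (a₀ • B + C) ^ n = a₀ ^ n • (A * B ^ n) := by
  intro n
  induction n with
  | zero => simp
  | succ n ih =>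
      rw [pow_succ, ← mul_assoc, ih, smul_mul_assoc, mul_add, mul_smul_comm,
        mul_assoc A (B ^ n) C, ← (hC (B ^ n)).eq, ← mul_assoc, hAC, zero_mul,
        add_zero, smul_smul, ← pow_succ, mul_assoc, ← pow_succ]


private lemma step_lemma (a₀ : R) (A0 B0 C0 T1 T2 ξ : ExteriorAlgebra R M) (b s : ℕ)
    (hB : ∀ t, Commute B0 t) (hC : ∀ t, Commute C0 t) (hAC : A0 * C0 = 0)
    (h : T1 * T2 = a₀ ^ s • ξ) :
    (a₀ • A0 * T1) * ((a₀ • B0 + C0) ^ b * T2)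
      = a₀ ^ (1 + b + s) • (A0 * B0 ^ b * ξ) := by
  have hV : ∀ t, Commute ((a₀ • B0 + C0) ^ b) t := fun t =>
    (((hB t).smul_left a₀).add_left (hC t)).pow_left _
  have h1 : T1 * ((a₀ • B0 + C0) ^ b * T2) = (a₀ • B0 + C0) ^ b * (T1 * T2) := by
    rw [← mul_assoc, ← (hV T1).eq, mul_assoc]
  rw [smul_mul_assoc, smul_mul_assoc, mul_assoc, h1, h, ← mul_assoc,
    key_pow a₀ A0 B0 C0 hB hC hAC b, smul_mul_assoc, mul_smul_comm,
    smul_smul, smul_smul]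
  congr 1
  ring

private lemma main_induction (a₀ : R) :
    ∀ (n : ℕ) (A B C : Fin n → ExteriorAlgebra R M),
      (∀ i t, Commute (B i) t) → (∀ i t, Commute (C i) t) →
      (∀ i, A i * C i = 0) → ∀ β : Fin n → ℕ,
      ∃ ξ : ExteriorAlgebra R M,
        (List.ofFn fun i => a₀ • A i).prod *
            (List.ofFn fun i => (a₀ • B i + C i) ^ β i).prod
          = a₀ ^ (n + ∑ i, β i) • ξ := by
  intro n
  induction n with
  | zero =>
      intro A B C _ _ _ β
      exact ⟨1, by simp⟩
  | succ n ih =>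
      intro A B C hB hC hAC β
      obtain ⟨ξ, hξ⟩ := ih (fun i => A i.succ) (fun i => B i.succ) (fun i => C i.succ)
        (fun i => hB i.succ) (fun i => hC i.succ) (fun i => hAC i.succ) (fun i => β i.succ)
      refine ⟨A 0 * B 0 ^ β 0 * ξ, ?_⟩
      simp only [List.ofFn_succ, List.prod_cons]
      rw [step_lemma a₀ (A 0) (B 0) (C 0) _ _ ξ (β 0) _ (hB 0) (hC 0) (hAC 0) hξ]
      have he : 1 + β 0 + (n + ∑ i : Fin n, β i.succ) = n + 1 + ∑ i, β i := by
        rw [Fin.sum_univ_succ]; omega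
      rw [he]

end Aux

/-- Algebraic core of Lemma 4.1: after a principalization `a_j = a₀ · a'_j`, the exterior
product `(⋀_i u_i) ∧ (⋀_i v_i^{β_i})`, where `u_i = Σ_j a_j • ι(0, e(i,j))` and
`v_i = Σ_j ι(D a_j, 0) · ι(0, e(i,j))`, is divisible by `a₀^{l + Σ_i β_i}`. -/
theorem exteriorAlgebra_principalization_divisibility
    (R₀ R : Type*) [CommRing R₀] [CommRing R] [Algebra R₀ R]
    (Ω : Type*) [AddCommGroup Ω] [Module R Ω] [Module R₀ Ω]
    (D : Derivation R₀ R Ω) (l m : ℕ) (hl : 1 ≤ l) (hm : 1 ≤ m)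
    (a₀ : R) (a' : Fin m → R) (a : Fin m → R) (ha : ∀ j, a j = a₀ * a' j)
    (u v : Fin l → ExteriorAlgebra R (Ω × (Fin l × Fin m → R)))
    (hu : ∀ i, u i = ∑ j : Fin m,
      a j • ExteriorAlgebra.ι R ((0 : Ω), Pi.single (i, j) (1 : R)))
    (hv : ∀ i, v i = ∑ j : Fin m,
      ExteriorAlgebra.ι R (D (a j), (0 : Fin l × Fin m → R)) *
        ExteriorAlgebra.ι R ((0 : Ω), Pi.single (i, j) (1 : R)))
    (β : Fin l → ℕ) :
    ∃ ξ : ExteriorAlgebra R (Ω × (Fin l × Fin m → R)),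
      (List.ofFn u).prod * (List.ofFn fun i => v i ^ β i).prod =
        a₀ ^ (l + ∑ i, β i) • ξ := by
  classical
  set M0 := Ω × (Fin l × Fin m → R) with hM0
  let e : Fin l → Fin m → M0 := fun i j => ((0 : Ω), Pi.single (i, j) (1 : R))
  let μ : Fin l → M0 := fun i => ∑ j, a' j • e i j
  let A : Fin l → ExteriorAlgebra R M0 := fun i => ExteriorAlgebra.ι R (μ i)
  let B : Fin l → ExteriorAlgebra R M0 := fun i =>
    ∑ j, ExteriorAlgebra.ι R ((D (a' j), 0) : M0) * ExteriorAlgebra.ι R (e i j)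
  let C : Fin l → ExteriorAlgebra R M0 := fun i =>
    ExteriorAlgebra.ι R ((D a₀, 0) : M0) * A i
  have h1 : ∀ i, u i = a₀ • A i := by
    intro i
    rw [hu]
    simp only [A, μ, e, map_sum, map_smul, Finset.smul_sum, smul_smul, ha]
  have hpair : ∀ j, ((D (a j), (0 : Fin l × Fin m → R)) : M0)
      = a₀ • ((D (a' j), 0) : M0) + a' j • ((D a₀, 0) : M0) := by
    intro j
    rw [ha, Derivation.leibniz]
    simp [Prod.smul_mk, Prod.mk_add_mk]
  have h2 : ∀ i, v i = a₀ • B i + C i := by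
    intro i
    rw [hv]
    simp only [hpair, map_add, map_smul, add_mul, smul_mul_assoc,
      Finset.sum_add_distrib, ← Finset.smul_sum]
    congr 1
    simp only [C, A, μ, e, map_sum, map_smul, Finset.mul_sum, mul_smul_comm,
      smul_mul_assoc]
  have hBc : ∀ i t, Commute (B i) t := by
    intro i t
    exact Commute.sum_left _ _ _ fun j _ => ι_mul_ι_central _ _ t
  have hCc : ∀ i t, Commute (C i) t := fun i t => ι_mul_ι_central _ _ t
  have hAC : ∀ i, A i * C i = 0 := by
    intro i
    show ExteriorAlgebra.ι R (μ i) * (ExteriorAlgebra.ι R ((D a₀, 0) : M0) *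
      ExteriorAlgebra.ι R (μ i)) = 0
    rw [← mul_assoc, ι_mul_ι_neg_swap (μ i) ((D a₀, 0) : M0), neg_mul, mul_assoc,
      ExteriorAlgebra.ι_sq_zero, mul_zero, neg_zero]
  obtain ⟨ξ, hξ⟩ := main_induction a₀ l A B C hBc hCc hAC β
  refine ⟨ξ, ?_⟩
  have hu' : u = fun i => a₀ • A i := funext h1
  have hv' : (fun i => v i ^ β i) = fun i => (a₀ • B i + C i) ^ β i :=
    funext fun i => by rw [h2 i]
  rw [hu', hv', hξ]
end

section
/- Let n ≥ 1, k ≥ 1, let U be an open neighborhood of 0 in (Fin (n−1) → ℂ) × ℂ (points written (z,w)), and let φ be a complex-analytic function on U. Suppose there is a neighborhood U' of 0 in ℂ^{n−1} such that for every j with 0 ≤ j ≤ k−1 and every z ∈ U' (with (z,0) ∈ U), the j-th derivative in w of φ at w = 0 vanishes: (d/dw)^j φ(z,0) = 0. Then there exist a neighborhood V of 0 in (Fin (n−1) → ℂ) × ℂ and a complex-analytic function h on V such that φ(z,w) = w^k · h(z,w) for all (z,w) ∈ V. -/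
open Filter Topology Set
open scoped NNReal ENNReal
namespace NoethAux

variable {E : Type*} [NormedAddCommGroup E] [NormedSpace ℂ E]

noncomputable def πE (E : Type*) [NormedAddCommGroup E] [NormedSpace ℂ E] :
    (E × ℂ) →L[ℂ] (E × ℂ) :=
  (ContinuousLinearMap.inl ℂ E ℂ).comp (ContinuousLinearMap.fst ℂ E ℂ)

@[simp] lemma πE_apply (v : E × ℂ) : πE E v = (v.1, 0) := rfl

lemma norm_πE_apply_le (v : E × ℂ) : ‖πE E v‖ ≤ ‖v‖ := by
  rw [πE_apply, Prod.norm_def, Prod.norm_def]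
  simp only [norm_zero]
  exact max_le_max le_rfl (norm_nonneg _)

def eE (E : Type*) [NormedAddCommGroup E] [NormedSpace ℂ E] : E × ℂ := (0, 1)

@[simp] lemma norm_eE : ‖eE E‖ = 1 := by simp [eE, Prod.norm_def]

lemma sub_proj (v : E × ℂ) : v - πE E v = v.2 • eE E := by simp [eE, Prod.ext_iff]

def σE {m : ℕ} (i : Fin (m + 1)) : Fin (m + 1) ≃ Fin (m + 1) :=
  (finSuccEquiv' i).trans (finSuccEquiv m).symm

@[simp] lemma σE_at {m : ℕ} (i : Fin (m + 1)) : σE i i = 0 := by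
  simp [σE, finSuccEquiv'_at]

@[simp] lemma σE_succAbove {m : ℕ} (i : Fin (m + 1)) (t : Fin m) :
    σE i (i.succAbove t) = t.succ := by
  simp [σE, finSuccEquiv'_succAbove]

/-- The tuple `(v, …, v, e, πv, …, πv)` with `e` in position `i` (ℕ-indexed). -/
noncomputable def patternN {m : ℕ} (i : ℕ) (v : E × ℂ) : Fin m → E × ℂ :=
  fun j => if (j : ℕ) < i then v else if (j : ℕ) = i then eE E else πE E v

/-- One term of the quotient series. -/
noncomputable def Qmi {m : ℕ}
    (P : ContinuousMultilinearMap ℂ (fun _ : Fin (m + 1) => E × ℂ) ℂ) (i : Fin (m + 1)) :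
    ContinuousMultilinearMap ℂ (fun _ : Fin m => E × ℂ) ℂ :=
  ((P.domDomCongr (σE i)).curryLeft (eE E)).compContinuousLinearMap
    (fun t : Fin m => if (i : ℕ) ≤ (t : ℕ) then πE E else ContinuousLinearMap.id ℂ (E × ℂ))

lemma Qmi_apply {m : ℕ}
    (P : ContinuousMultilinearMap ℂ (fun _ : Fin (m + 1) => E × ℂ) ℂ) (i : Fin (m + 1))
    (v : Fin m → E × ℂ) :
    Qmi P i v = P (fun j => Fin.cons (α := fun _ : Fin (m + 1) => E × ℂ) (eE E)
      (fun t : Fin m => if (i : ℕ) ≤ (t : ℕ) then πE E (v t) else v t) (σE i j)) := by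
  rw [Qmi, ContinuousMultilinearMap.compContinuousLinearMap_apply,
    ContinuousMultilinearMap.curryLeft_apply, ContinuousMultilinearMap.domDomCongr_apply]
  congr 1
  funext j
  congr 1
  funext t
  by_cases h : (i : ℕ) ≤ (t : ℕ) <;> simp [h]

lemma Qmi_diag {m : ℕ}
    (P : ContinuousMultilinearMap ℂ (fun _ : Fin (m + 1) => E × ℂ) ℂ) (i : Fin (m + 1))
    (v : E × ℂ) :
    Qmi P i (fun _ => v) = P (patternN (i : ℕ) v) := by
  rw [Qmi_apply]
  congr 1
  funext j
  by_cases hj : j = i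
  · subst hj
    simp [patternN, lt_irrefl]
  · obtain ⟨t, rfl⟩ := Fin.exists_succAbove_eq hj
    rw [σE_succAbove, Fin.cons_succ]
    rcases lt_or_ge (t : ℕ) (i : ℕ) with h | h
    · rw [if_neg (by omega)]
      have hs : i.succAbove t = t.castSucc := Fin.succAbove_of_castSucc_lt i t (by
        rw [Fin.lt_def]; simpa using h)
      rw [hs]
      simp only [patternN, Fin.coe_castSucc]
      rw [if_pos h]
    · rw [if_pos h]
      have hs : i.succAbove t = t.succ := Fin.succAbove_of_le_castSucc i t (by
        rw [Fin.le_def]; simpa using h)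
      rw [hs]
      simp only [patternN, Fin.val_succ]
      rw [if_neg (by omega), if_neg (by omega)]

lemma Qmi_norm_apply_le {m : ℕ}
    (P : ContinuousMultilinearMap ℂ (fun _ : Fin (m + 1) => E × ℂ) ℂ) (i : Fin (m + 1))
    (v : Fin m → E × ℂ) :
    ‖Qmi P i v‖ ≤ ‖P‖ * ∏ t, ‖v t‖ := by
  rw [Qmi_apply]
  set u : Fin (m + 1) → E × ℂ := Fin.cons (α := fun _ : Fin (m + 1) => E × ℂ) (eE E)
      (fun t : Fin m => if (i : ℕ) ≤ (t : ℕ) then πE E (v t) else v t) with hu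
  refine (P.le_opNorm _).trans ?_
  refine mul_le_mul_of_nonneg_left ?_ (norm_nonneg P)
  have h1 : (∏ j : Fin (m + 1), ‖u (σE i j)‖) = ∏ j : Fin (m + 1), ‖u j‖ :=
    Equiv.prod_comp (σE i) (fun j => ‖u j‖)
  have h0 : u 0 = eE E := Fin.cons_zero _ _
  have hs : ∀ t : Fin m, ‖u t.succ‖ ≤ ‖v t‖ := by
    intro t
    have : u t.succ = if (i : ℕ) ≤ (t : ℕ) then πE E (v t) else v t := Fin.cons_succ _ _ _
    rw [this]
    split_ifs
    · exact norm_πE_apply_le _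
    · exact le_rfl
  calc (∏ j : Fin (m + 1), ‖u (σE i j)‖) = ∏ j : Fin (m + 1), ‖u j‖ := h1
    _ = ‖u 0‖ * ∏ t : Fin m, ‖u t.succ‖ := Fin.prod_univ_succ _
    _ ≤ 1 * ∏ t : Fin m, ‖v t‖ := by
        rw [h0, norm_eE]
        exact mul_le_mul_of_nonneg_left
          (Finset.prod_le_prod (fun t _ => norm_nonneg _) (fun t _ => hs t)) zero_le_one
    _ = ∏ t : Fin m, ‖v t‖ := one_mul _

lemma update_lemma1 {m : ℕ} (i : Fin (m + 1)) (v : E × ℂ) :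
    (fun j : Fin (m + 1) => if (j : ℕ) < (i : ℕ) + 1 then v else πE E v)
      = Function.update (patternN (i : ℕ) v) i v := by
  funext j
  rw [Function.update_apply]
  by_cases hj : j = i
  · subst hj; rw [if_pos rfl, if_pos (by omega)]
  · have hne : (j : ℕ) ≠ (i : ℕ) := fun h => hj (Fin.ext h)
    rw [if_neg hj]
    simp only [patternN]
    by_cases h : (j : ℕ) < (i : ℕ)
    · rw [if_pos (by omega), if_pos h]
    · rw [if_neg (by omega), if_neg h, if_neg hne]

lemma update_lemma2 {m : ℕ} (i : Fin (m + 1)) (v : E × ℂ) :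
    (fun j : Fin (m + 1) => if (j : ℕ) < (i : ℕ) then v else πE E v)
      = Function.update (patternN (i : ℕ) v) i (πE E v) := by
  funext j
  rw [Function.update_apply]
  by_cases hj : j = i
  · subst hj; rw [if_pos rfl, if_neg (by omega)]
  · have hne : (j : ℕ) ≠ (i : ℕ) := fun h => hj (Fin.ext h)
    rw [if_neg hj]
    simp only [patternN]
    by_cases h : (j : ℕ) < (i : ℕ)
    · rw [if_pos h, if_pos h]
    · rw [if_neg h, if_neg h, if_neg hne]

lemma pattern_self {m : ℕ} (i : Fin (m + 1)) (v : E × ℂ) :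
    patternN (m := m + 1) (i : ℕ) v i = eE E := by
  simp [patternN]

/-- Telescoping identity. -/
lemma telescope {m : ℕ}
    (P : ContinuousMultilinearMap ℂ (fun _ : Fin (m + 1) => E × ℂ) ℂ) (v : E × ℂ) :
    P (fun _ => v) - P (fun _ => πE E v)
      = v.2 * ∑ i : Fin (m + 1), P (patternN (i : ℕ) v) := by
  have key : ∀ i : Fin (m + 1),
      P (fun j => if (j : ℕ) < (i : ℕ) + 1 then v else πE E v)
        - P (fun j => if (j : ℕ) < (i : ℕ) then v else πE E v)
        = v.2 * P (patternN (i : ℕ) v) := by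
    intro i
    rw [update_lemma1, update_lemma2, ← ContinuousMultilinearMap.map_update_sub, sub_proj,
      ContinuousMultilinearMap.map_update_smul]
    rw [show Function.update (patternN (m := m + 1) (i : ℕ) v) i (eE E)
        = patternN (i : ℕ) v by
      conv_rhs => rw [← Function.update_eq_self i (patternN (m := m + 1) (i : ℕ) v)]
      rw [pattern_self]]
    rw [smul_eq_mul]
  have tel := Finset.sum_range_sub
    (fun n : ℕ => P (fun j => if (j : ℕ) < n then v else πE E v)) (m + 1)
  have hT1 : (fun j : Fin (m + 1) => if (j : ℕ) < m + 1 then v else πE E v)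
      = fun _ => v := by
    funext j; rw [if_pos j.isLt]
  have hT0 : (fun j : Fin (m + 1) => if (j : ℕ) < 0 then v else πE E v)
      = fun _ => πE E v := by
    funext j; rw [if_neg (by omega)]
  calc P (fun _ => v) - P (fun _ => πE E v)
      = ∑ n ∈ Finset.range (m + 1),
          (P (fun j => if (j : ℕ) < n + 1 then v else πE E v)
            - P (fun j => if (j : ℕ) < n then v else πE E v)) := by
        rw [tel, hT1, hT0]
    _ = ∑ i : Fin (m + 1),
          (P (fun j => if (j : ℕ) < (i : ℕ) + 1 then v else πE E v)
            - P (fun j => if (j : ℕ) < (i : ℕ) then v else πE E v)) :=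
        (Fin.sum_univ_eq_sum_range _ (m + 1)).symm
    _ = ∑ i : Fin (m + 1), v.2 * P (patternN (i : ℕ) v) := by
        exact Finset.sum_congr rfl (fun i _ => key i)
    _ = v.2 * ∑ i : Fin (m + 1), P (patternN (i : ℕ) v) := (Finset.mul_sum _ _ _).symm

/-- The quotient power series. -/
noncomputable def qSeries (p : FormalMultilinearSeries ℂ (E × ℂ) ℂ) :
    FormalMultilinearSeries ℂ (E × ℂ) ℂ :=
  fun m => ∑ i : Fin (m + 1), Qmi (p (m + 1)) i

lemma qSeries_apply (p : FormalMultilinearSeries ℂ (E × ℂ) ℂ) (m : ℕ) :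
    qSeries p m = ∑ i : Fin (m + 1), Qmi (p (m + 1)) i := rfl

lemma qSeries_norm_le (p : FormalMultilinearSeries ℂ (E × ℂ) ℂ) (m : ℕ) :
    ‖qSeries p m‖ ≤ (m + 1) * ‖p (m + 1)‖ := by
  refine ContinuousMultilinearMap.opNorm_le_bound
    (by positivity : (0:ℝ) ≤ (m + 1) * ‖p (m + 1)‖) (fun v => ?_)
  rw [qSeries_apply, ContinuousMultilinearMap.sum_apply]
  refine (norm_sum_le _ _).trans ?_
  calc (∑ i : Fin (m + 1), ‖Qmi (p (m + 1)) i v‖)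
      ≤ ∑ _i : Fin (m + 1), ‖p (m + 1)‖ * ∏ t, ‖v t‖ :=
        Finset.sum_le_sum (fun i _ => Qmi_norm_apply_le _ i v)
    _ = (m + 1) * (‖p (m + 1)‖ * ∏ t, ‖v t‖) := by
        rw [Finset.sum_const, Finset.card_univ, Fintype.card_fin]
        ring
    _ = (m + 1) * ‖p (m + 1)‖ * ∏ t, ‖v t‖ := by ring

lemma qSeries_diag (p : FormalMultilinearSeries ℂ (E × ℂ) ℂ) (m : ℕ) (v : E × ℂ) :
    qSeries p m (fun _ => v) = ∑ i : Fin (m + 1), (p (m + 1)) (patternN (i : ℕ) v) := by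
  rw [qSeries_apply, ContinuousMultilinearMap.sum_apply]
  exact Finset.sum_congr rfl (fun i _ => Qmi_diag _ i v)

lemma key_identity (p : FormalMultilinearSeries ℂ (E × ℂ) ℂ) (m : ℕ) (v : E × ℂ) :
    p (m + 1) (fun _ => v) - p (m + 1) (fun _ => πE E v)
      = v.2 * qSeries p m (fun _ => v) := by
  rw [qSeries_diag, telescope]

lemma qSeries_radius_pos (p : FormalMultilinearSeries ℂ (E × ℂ) ℂ)
    (hp : 0 < p.radius) : 0 < (qSeries p).radius := by
  obtain ⟨r₂, h0r₂, hr₂⟩ : ∃ r₂ : ℝ≥0, 0 < (r₂ : ℝ≥0∞) ∧ (r₂ : ℝ≥0∞) < p.radius := by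
    obtain ⟨r₂, h1, h2⟩ := ENNReal.lt_iff_exists_nnreal_btwn.mp hp
    exact ⟨r₂, h1, h2⟩
  have h0r₂' : (0 : ℝ) < r₂ := by exact_mod_cast h0r₂
  obtain ⟨C, hC0, hC⟩ := p.norm_mul_pow_le_of_lt_radius hr₂
  set r₁ : ℝ≥0 := r₂ / 2 with hr₁
  have h0r₁ : (0 : ℝ) < r₁ := by
    rw [hr₁]; push_cast; positivity
  have hsum : Summable (fun m : ℕ => ‖qSeries p m‖ * (r₁ : ℝ) ^ m) := by
    have hs : Summable (fun m : ℕ => (C / r₂) * ((m + 1) * (1 / 2 : ℝ) ^ m)) := by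
      apply Summable.mul_left
      have h1 : Summable (fun m : ℕ => (m : ℝ) ^ 1 * (1 / 2 : ℝ) ^ m) :=
        summable_pow_mul_geometric_of_norm_lt_one 1 (by norm_num)
      have h2 : Summable (fun m : ℕ => (1 / 2 : ℝ) ^ m) :=
        summable_geometric_of_lt_one (by norm_num) (by norm_num)
      simpa [add_mul, pow_one] using h1.add h2
    refine Summable.of_nonneg_of_le (fun m => by positivity) (fun m => ?_) hs
    have hb := qSeries_norm_le p m
    have hr1m : (r₁ : ℝ) ^ m = (r₂ : ℝ) ^ m * (1 / 2 : ℝ) ^ m := by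
      rw [hr₁]; simp only [NNReal.coe_div, NNReal.coe_ofNat]; rw [div_pow, one_div, div_eq_mul_inv, inv_pow]
    calc ‖qSeries p m‖ * (r₁ : ℝ) ^ m
        ≤ ((m + 1) * ‖p (m + 1)‖) * (r₁ : ℝ) ^ m := by
          exact mul_le_mul_of_nonneg_right hb (by positivity)
      _ = ((m + 1) * (1 / 2 : ℝ) ^ m) * ((‖p (m + 1)‖ * (r₂ : ℝ) ^ (m + 1)) / r₂) := by
          rw [hr1m]; field_simp; ring
      _ ≤ ((m + 1) * (1 / 2 : ℝ) ^ m) * (C / r₂) := by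
          have h := hC (m + 1)
          gcongr
      _ = (C / r₂) * ((m + 1) * (1 / 2 : ℝ) ^ m) := by ring
  have := FormalMultilinearSeries.le_radius_of_summable _ hsum
  calc (0 : ℝ≥0∞) < (r₁ : ℝ≥0∞) := by exact_mod_cast h0r₁
    _ ≤ (qSeries p).radius := this

/-- Core division lemma: if `f` is analytic at `(z₀,0)` and vanishes on `{w = 0}` near `z₀`,
then `f = w * g` near `(z₀,0)` with `g` analytic. -/
lemma core {f : E × ℂ → ℂ} {z₀ : E} (hf : AnalyticAt ℂ f (z₀, 0))
    (h0 : ∀ᶠ z in 𝓝 z₀, f (z, 0) = 0) :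
    ∃ g : E × ℂ → ℂ, AnalyticAt ℂ g (z₀, 0) ∧
      ∀ᶠ q in 𝓝 ((z₀, 0) : E × ℂ), f q = q.2 * g q := by
  obtain ⟨p, r, hp⟩ := hf
  set x₀ : E × ℂ := (z₀, 0) with hx₀
  have hrad : 0 < p.radius := lt_of_lt_of_le hp.r_pos hp.r_le
  have hqrad := qSeries_radius_pos p hrad
  set g : E × ℂ → ℂ := fun y => (qSeries p).sum (y - x₀) with hg
  have hq : HasFPowerSeriesOnBall (qSeries p).sum (qSeries p) 0 (qSeries p).radius :=
    (qSeries p).hasFPowerSeriesOnBall hqrad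
  have hganal : AnalyticAt ℂ g x₀ := by
    have h2 : AnalyticAt ℂ (fun y : E × ℂ => y - x₀) x₀ := analyticAt_id.sub analyticAt_const
    have h1 : AnalyticAt ℂ (qSeries p).sum ((fun y : E × ℂ => y - x₀) x₀) := by
      simpa using hq.analyticAt
    simpa [hg, Function.comp_def] using AnalyticAt.comp (f := fun y : E × ℂ => y - x₀) h1 h2
  refine ⟨g, hganal, ?_⟩
  obtain ⟨δ, hδ0, hδ⟩ := Metric.eventually_nhds_iff.mp h0
  obtain ⟨ρ, hρ0, hρr⟩ : ∃ ρ : ℝ≥0, (0 : ℝ≥0∞) < ρ ∧ (ρ : ℝ≥0∞) < r :=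
    ENNReal.lt_iff_exists_nnreal_btwn.mp hp.r_pos
  have hρ0' : (0 : ℝ) < ρ := by exact_mod_cast hρ0
  set ε : ℝ := min δ ρ with hε
  have hε0 : 0 < ε := lt_min hδ0 hρ0'
  rw [Metric.eventually_nhds_iff]
  refine ⟨ε, hε0, fun q hq' => ?_⟩
  set v : E × ℂ := q - x₀ with hv
  have hqv : q = x₀ + v := by rw [hv]; abel
  have hq2 : q.2 = v.2 := by rw [hv]; simp [hx₀]
  have hnv : ‖v‖ < ε := by rw [hv, ← dist_eq_norm]; exact hq'
  have hmem : v ∈ Metric.eball (0 : E × ℂ) r := by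
    rw [Metric.mem_eball, edist_zero_right]
    calc (‖v‖₊ : ℝ≥0∞) < (ρ : ℝ≥0∞) := by
          exact_mod_cast (show ‖v‖ < (ρ : ℝ) from lt_of_lt_of_le hnv (min_le_right _ _))
      _ < r := hρr
  have hmemπ : πE E v ∈ Metric.eball (0 : E × ℂ) r := by
    rw [Metric.mem_eball, edist_zero_right]
    calc (‖πE E v‖₊ : ℝ≥0∞) ≤ (‖v‖₊ : ℝ≥0∞) := by
          exact_mod_cast norm_πE_apply_le v
      _ < r := by
          calc (‖v‖₊ : ℝ≥0∞) < (ρ : ℝ≥0∞) := by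
                exact_mod_cast (show ‖v‖ < (ρ : ℝ) from lt_of_lt_of_le hnv (min_le_right _ _))
            _ < r := hρr
  have hzero_slice : ∀ z : E, dist z z₀ < ε → f (z, 0) = 0 := fun z hz =>
    hδ (lt_of_lt_of_le hz (min_le_left _ _))
  have hsum1 : HasSum (fun m => p m (fun _ => v)) (f (x₀ + v)) := hp.hasSum hmem
  have hx₀π : x₀ + πE E v = (z₀ + v.1, (0 : ℂ)) := by
    rw [hx₀]; ext <;> simp
  have hzero2 : f (x₀ + πE E v) = 0 := by
    rw [hx₀π]
    refine hzero_slice _ ?_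
    rw [dist_eq_norm, add_sub_cancel_left]
    exact lt_of_le_of_lt (norm_fst_le v) hnv
  have hsum2 : HasSum (fun m => p m (fun _ => πE E v)) 0 := hzero2 ▸ hp.hasSum hmemπ
  have hsub := hsum1.sub hsum2
  rw [sub_zero] at hsub
  have hshift := (hasSum_nat_add_iff' (f := fun m =>
      p m (fun _ => v) - p m (fun _ => πE E v)) 1).mpr hsub
  have h00 : (fun _ : Fin 0 => v) = (fun _ : Fin 0 => πE E v) := Subsingleton.elim _ _
  rw [Finset.range_one, Finset.sum_singleton] at hshift
  rw [show p 0 (fun _ => v) - p 0 (fun _ => πE E v) = 0 by rw [h00, sub_self]] at hshift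
  rw [sub_zero] at hshift
  have hsum3 : HasSum (fun m => v.2 * qSeries p m (fun _ => v)) (f (x₀ + v)) := by
    refine hshift.congr_fun ?_  -- maybe wrong name; adjust below
    intro m
    exact (key_identity p m v).symm
  by_cases hv2 : v.2 = 0
  · have hq20 : q.2 = 0 := hq2.trans hv2
    have hqq : q = (q.1, (0 : ℂ)) := by rw [← hq20]
    rw [hq20, zero_mul, hqq]
    refine hzero_slice _ ?_
    rw [dist_eq_norm]
    exact lt_of_le_of_lt (norm_fst_le v) hnv
  · have hsum4 : HasSum (fun m => qSeries p m (fun _ => v)) (v.2⁻¹ * f (x₀ + v)) := by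
      have := hsum3.mul_left v.2⁻¹
      simpa [inv_mul_cancel_left₀ hv2] using this
    have hgval : g q = v.2⁻¹ * f (x₀ + v) := by
      rw [hg]
      simp only
      rw [← hv]
      exact hsum4.tsum_eq
    rw [hqv] at hgval ⊢
    have h2 : (x₀ + v).2 = v.2 := by simp [hx₀]
    rw [hgval, h2, mul_inv_cancel_left₀ hv2]

/-- Canonical division of `f` by the second coordinate. -/
noncomputable def Hdiv (f : E × ℂ → ℂ) : E × ℂ → ℂ :=
  fun q => if q.2 = 0 then deriv (fun w : ℂ => f (q.1, w)) 0 else f q / q.2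

lemma analyticAt_slice {g : E × ℂ → ℂ} {z : E} {w : ℂ} (hg : AnalyticAt ℂ g (z, w)) :
    AnalyticAt ℂ (fun w' : ℂ => g (z, w')) w :=
  hg.comp ((analyticAt_const).prod analyticAt_id)

/-- Global statement for division by `w` once. -/
lemma step1 {φ : E × ℂ → ℂ} (hφ : AnalyticAt ℂ φ 0)
    (h0 : ∀ᶠ z in 𝓝 (0 : E), φ (z, 0) = 0) :
    ∃ V ∈ 𝓝 (0 : E × ℂ), IsOpen V ∧ AnalyticOnNhd ℂ (Hdiv φ) V ∧
      ∀ q ∈ V, φ q = q.2 * Hdiv φ q := by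
  obtain ⟨W, hWmem, hWopen, hW0⟩ : ∃ W, (∀ z ∈ W, φ (z, 0) = 0) ∧ IsOpen W ∧ (0 : E) ∈ W :=
    eventually_nhds_iff.mp h0
  set Ω : Set (E × ℂ) := {x | AnalyticAt ℂ φ x} with hΩ
  have hΩopen : IsOpen Ω := isOpen_analyticAt ℂ φ
  have hΩ0 : (0 : E × ℂ) ∈ Ω := hφ
  set V : Set (E × ℂ) := Ω ∩ (W ×ˢ (univ : Set ℂ)) with hV
  have hVopen : IsOpen V := hΩopen.inter (hWopen.prod isOpen_univ)
  have hV0 : (0 : E × ℂ) ∈ V := ⟨hΩ0, hW0, mem_univ _⟩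
  refine ⟨V, hVopen.mem_nhds hV0, hVopen, ?_, ?_⟩
  · rintro ⟨x1, x2⟩ hx
    by_cases hx2 : x2 = 0
    · subst hx2
      have hφx : AnalyticAt ℂ φ (x1, (0 : ℂ)) := hx.1
      have h0x : ∀ᶠ z in 𝓝 x1, φ (z, 0) = 0 := by
        filter_upwards [hWopen.mem_nhds hx.2.1] with z hz using hWmem z hz
      obtain ⟨g, hganal, hev⟩ := core hφx h0x
      refine hganal.congr ?_
      filter_upwards [hev, hev.eventually_nhds, hganal.eventually_analyticAt]
      rintro ⟨q1, q2⟩ h1 h2 h3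
      by_cases hq2 : q2 = 0
      · subst hq2
        have hc : ContinuousAt (fun w : ℂ => ((q1, w) : E × ℂ)) 0 :=
          (continuous_const.prodMk continuous_id).continuousAt
        have hslice : ∀ᶠ w in 𝓝 (0 : ℂ), φ (q1, w) = w * g (q1, w) := hc.eventually h2
        have hG : AnalyticAt ℂ (fun w : ℂ => g (q1, w)) 0 := analyticAt_slice h3
        refine Eq.symm ?_
        show Hdiv φ (q1, 0) = g (q1, 0)
        rw [Hdiv, if_pos rfl]
        have h4 : deriv (fun w : ℂ => φ (q1, w)) 0 = deriv (fun w : ℂ => w * g (q1, w)) 0 :=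
          Filter.EventuallyEq.deriv_eq hslice
        rw [h4, deriv_fun_mul differentiableAt_fun_id hG.differentiableAt]
        simp
      · refine Eq.symm ?_
        show Hdiv φ (q1, q2) = g (q1, q2)
        rw [Hdiv, if_neg hq2, h1, mul_div_cancel_left₀ _ hq2]
    · -- away from `{w = 0}` the function is a quotient of analytic functions
      have hopen : IsOpen {q : E × ℂ | q.2 ≠ 0} := isOpen_ne.preimage continuous_snd
      have hq : AnalyticAt ℂ (fun q : E × ℂ => φ q / q.2) (x1, x2) :=
        (hx.1).div analyticAt_snd hx2
      refine hq.congr ?_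
      filter_upwards [hopen.mem_nhds hx2] with q hq2
      show φ q / q.2 = Hdiv φ q
      rw [Hdiv, if_neg hq2]
  · rintro ⟨q1, q2⟩ hq
    by_cases hq2 : q2 = 0
    · subst hq2
      show φ (q1, 0) = 0 * Hdiv φ (q1, 0)
      rw [zero_mul]
      exact hWmem _ hq.2.1
    · show φ (q1, q2) = q2 * Hdiv φ (q1, q2)
      rw [Hdiv, if_neg hq2, mul_div_cancel₀ _ hq2]

lemma analyticAt_deriv {f : ℂ → ℂ} {x : ℂ} (hf : AnalyticAt ℂ f x) :
    AnalyticAt ℂ (deriv f) x := by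
  obtain ⟨s, hmem, hopen, hx⟩ := eventually_nhds_iff.mp hf.eventually_analyticAt
  exact AnalyticOnNhd.deriv (fun y hy => hmem y hy) x hx

lemma iteratedDeriv_add_at {f g : ℂ → ℂ} {x : ℂ} (n : ℕ) (hf : AnalyticAt ℂ f x)
    (hg : AnalyticAt ℂ g x) :
    iteratedDeriv n (fun w => f w + g w) x = iteratedDeriv n f x + iteratedDeriv n g x := by
  induction n generalizing f g x with
  | zero => simp
  | succ n ih =>
    rw [iteratedDeriv_succ', iteratedDeriv_succ', iteratedDeriv_succ']
    have hev : deriv (fun w => f w + g w) =ᶠ[𝓝 x] fun w => deriv f w + deriv g w := by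
      filter_upwards [hf.eventually_analyticAt, hg.eventually_analyticAt] with y hfy hgy
      exact deriv_add hfy.differentiableAt hgy.differentiableAt
    rw [Filter.EventuallyEq.iteratedDeriv_eq n hev]
    exact ih (analyticAt_deriv hf) (analyticAt_deriv hg)

lemma iteratedDeriv_id_mul {G : ℂ → ℂ} (hG : AnalyticAt ℂ G 0) (j : ℕ) :
    iteratedDeriv (j + 1) (fun w => w * G w) 0 = ((j : ℂ) + 1) * iteratedDeriv j G 0 := by
  induction j generalizing G with
  | zero =>
    rw [iteratedDeriv_one, deriv_fun_mul differentiableAt_fun_id hG.differentiableAt]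
    simp
  | succ j ih =>
    rw [iteratedDeriv_succ']
    have hev : deriv (fun w => w * G w) =ᶠ[𝓝 (0 : ℂ)] fun w => G w + w * deriv G w := by
      filter_upwards [hG.eventually_analyticAt] with y hy
      rw [deriv_fun_mul differentiableAt_fun_id hy.differentiableAt]
      simp
    have hmulanal : AnalyticAt ℂ (fun w : ℂ => w * deriv G w) 0 := by
      exact analyticAt_id.mul (analyticAt_deriv hG)
    rw [Filter.EventuallyEq.iteratedDeriv_eq (j + 1) hev,
      iteratedDeriv_add_at (j + 1) hG hmulanal,
      ih (analyticAt_deriv hG), ← iteratedDeriv_succ']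
    push_cast
    ring

/-- Main induction: division by `w^k`. -/
lemma main_aux (k : ℕ) (hk : 1 ≤ k) {φ : E × ℂ → ℂ} (hφ : AnalyticAt ℂ φ 0)
    (hv : ∀ j < k, ∀ᶠ z in 𝓝 (0 : E), iteratedDeriv j (fun w : ℂ => φ (z, w)) 0 = 0) :
    ∃ V ∈ 𝓝 (0 : E × ℂ), ∃ h : E × ℂ → ℂ, AnalyticOnNhd ℂ h V ∧
      ∀ q ∈ V, φ q = q.2 ^ k * h q := by
  induction k, hk using Nat.le_induction generalizing φ with
  | base =>
    have h0 : ∀ᶠ z in 𝓝 (0 : E), φ (z, 0) = 0 := by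
      have := hv 0 one_pos
      simpa [iteratedDeriv_zero] using this
    obtain ⟨V, hVmem, hVopen, hanal, heq⟩ := step1 hφ h0
    exact ⟨V, hVmem, Hdiv φ, hanal, fun q hq => by rw [pow_one]; exact heq q hq⟩
  | succ k hk ih =>
    have h0 : ∀ᶠ z in 𝓝 (0 : E), φ (z, 0) = 0 := by
      have := hv 0 (by omega)
      simpa [iteratedDeriv_zero] using this
    obtain ⟨V₁, hV₁mem, hV₁open, hHanal, hHeq⟩ := step1 hφ h0
    have hH0 : AnalyticAt ℂ (Hdiv φ) 0 := hHanal 0 (mem_of_mem_nhds hV₁mem)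
    have hsliceV : ∀ᶠ z in 𝓝 (0 : E), ((z, (0 : ℂ)) : E × ℂ) ∈ V₁ := by
      have hc : ContinuousAt (fun z : E => ((z, (0 : ℂ)) : E × ℂ)) 0 :=
        (continuous_id.prodMk continuous_const).continuousAt
      exact hc.preimage_mem_nhds (by simpa only [Prod.mk_zero_zero] using hV₁mem)
    have hv' : ∀ j < k, ∀ᶠ z in 𝓝 (0 : E),
        iteratedDeriv j (fun w : ℂ => Hdiv φ (z, w)) 0 = 0 := by
      intro j hj
      filter_upwards [hv (j + 1) (by omega), hsliceV] with z h1 h2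
      have hc2 : ContinuousAt (fun w : ℂ => ((z, w) : E × ℂ)) 0 :=
        (continuous_const.prodMk continuous_id).continuousAt
      have hopenev : ∀ᶠ w in 𝓝 (0 : ℂ), ((z, w) : E × ℂ) ∈ V₁ :=
        hc2.preimage_mem_nhds (hV₁open.mem_nhds h2)
      have hev : (fun w : ℂ => φ (z, w)) =ᶠ[𝓝 (0 : ℂ)] fun w => w * Hdiv φ (z, w) := by
        filter_upwards [hopenev] with w hw
        exact hHeq _ hw
      have hGanal : AnalyticAt ℂ (fun w : ℂ => Hdiv φ (z, w)) 0 :=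
        analyticAt_slice (hHanal _ h2)
      rw [Filter.EventuallyEq.iteratedDeriv_eq (j + 1) hev,
        iteratedDeriv_id_mul hGanal j] at h1
      have hne : ((j : ℂ) + 1) ≠ 0 := Nat.cast_add_one_ne_zero j
      exact (mul_eq_zero.mp h1).resolve_left hne
    obtain ⟨V₂, hV₂mem, h, hhanal, hheq⟩ := ih hH0 hv'
    refine ⟨V₁ ∩ V₂, inter_mem hV₁mem hV₂mem, h, hhanal.mono inter_subset_right, ?_⟩
    intro q hq
    rw [hHeq q hq.1, hheq q hq.2]
    ring

end NoethAux

/-- The operators `1, ∂/∂w, …, ∂^{k-1}/∂w^{k-1}` form a defining set of Noetherian operators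
for `(w^k) ⊂ O_{ℂⁿ,0}`: if all the transversal derivatives of order `≤ k-1` of an analytic
function `φ` vanish on `{w = 0}` near `0`, then `φ = w^k · h` near `0` for some analytic `h`. -/
theorem analytic_eq_pow_mul_of_transversal_derivs_vanish
    (n k : ℕ) (hn : 1 ≤ n) (hk : 1 ≤ k)
    (U : Set ((Fin (n - 1) → ℂ) × ℂ)) (hUopen : IsOpen U)
    (hU0 : (0 : (Fin (n - 1) → ℂ) × ℂ) ∈ U)
    (φ : ((Fin (n - 1) → ℂ) × ℂ) → ℂ) (hφ : AnalyticOnNhd ℂ φ U)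
    (hvanish : ∃ U' ∈ nhds (0 : Fin (n - 1) → ℂ),
      ∀ j ≤ k - 1, ∀ z ∈ U', (z, (0 : ℂ)) ∈ U →
        iteratedDeriv j (fun w : ℂ => φ (z, w)) 0 = 0) :
    ∃ V ∈ nhds (0 : (Fin (n - 1) → ℂ) × ℂ),
      ∃ h : ((Fin (n - 1) → ℂ) × ℂ) → ℂ,
        AnalyticOnNhd ℂ h V ∧ ∀ p ∈ V, φ p = p.2 ^ k * h p := by
  obtain ⟨U', hU'mem, hU'⟩ := hvanish
  have hφ0 : AnalyticAt ℂ φ 0 := hφ 0 hU0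
  have hvv : ∀ j < k, ∀ᶠ z in 𝓝 (0 : Fin (n - 1) → ℂ),
      iteratedDeriv j (fun w : ℂ => φ (z, w)) 0 = 0 := by
    intro j hj
    have hc : ContinuousAt (fun z : (Fin (n - 1) → ℂ) =>
        ((z, (0 : ℂ)) : (Fin (n - 1) → ℂ) × ℂ)) 0 :=
      (continuous_id.prodMk continuous_const).continuousAt
    have hUm : ∀ᶠ z in 𝓝 (0 : Fin (n - 1) → ℂ),
        ((z, (0 : ℂ)) : (Fin (n - 1) → ℂ) × ℂ) ∈ U :=
      hc.preimage_mem_nhds (by simpa only [Prod.mk_zero_zero] using hUopen.mem_nhds hU0)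
    filter_upwards [hU'mem, hUm] with z h1 h2
    exact hU' j (by omega) z h1 h2
  exact NoethAux.main_aux k hk hφ0 hvv
end
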